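/- arXiv:2110.01700 — 7 statements merged into one kernel-verified Lean document; each statement's English description precedes it below -/
import Mathlib

section
/- Let H ∈ ℂ^{n×m}, let H̄ ∈ ℂ^{m×m} be Hermitian with H̄ − I_m positive semidefinite, and let X, Y ∈ ℂ^{n×n} be Hermitian positive semidefinite. Then the matrices H̄ + Hᴴ X H and H̄ + Hᴴ Y H are invertible and ‖ H (H̄ + Hᴴ X H)⁻¹ Hᴴ − H (H̄ + Hᴴ Y H)⁻¹ Hᴴ ‖ ≤ λ_max(H Hᴴ)² · ‖X − Y‖. -/
open Matrix
open scoped ComplexOrder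

/-- Frobenius norm of a complex matrix. -/
noncomputable def frobNorm {a b : ℕ} (A : Matrix (Fin a) (Fin b) ℂ) : ℝ :=
  Real.sqrt (∑ i, ∑ j, ‖A i j‖ ^ 2)

/-- Largest eigenvalue of `H Hᴴ`. -/
noncomputable def lambdaMaxHHH {a b : ℕ} (H : Matrix (Fin a) (Fin b) ℂ) : ℝ :=
  ⨆ i, (Matrix.isHermitian_mul_conjTranspose_self H).eigenvalues i

lemma trace_psd_re_nonneg {k : ℕ} {P : Matrix (Fin k) (Fin k) ℂ} (h : P.PosSemidef) :
    0 ≤ (P.trace).re := by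
  have h1 : ∀ i, 0 ≤ (P i i).re := by
    intro i
    have := h.re_dotProduct_nonneg (Pi.single i 1)
    simpa [dotProduct, mulVec, Pi.single_apply, Finset.sum_ite_eq] using this
  simpa [Matrix.trace, Matrix.diag, Complex.re_sum] using Finset.sum_nonneg fun i _ => h1 i

lemma frob_sq_eq {a b : ℕ} (A : Matrix (Fin a) (Fin b) ℂ) :
    ((Aᴴ * A).trace).re = ∑ i, ∑ j, ‖A i j‖^2 := by
  rw [Matrix.trace]
  simp only [Matrix.diag, Matrix.mul_apply, Matrix.conjTranspose_apply, Complex.re_sum]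
  rw [Finset.sum_comm]
  congr 1; ext i; congr 1; ext j
  rw [Complex.star_def, ← Complex.normSq_eq_conj_mul_self, Complex.ofReal_re,
    Complex.normSq_eq_norm_sq]

lemma frobNorm_nonneg' {a b : ℕ} (A : Matrix (Fin a) (Fin b) ℂ) : 0 ≤ frobNorm A :=
  Real.sqrt_nonneg _

lemma frobNorm_sq {a b : ℕ} (A : Matrix (Fin a) (Fin b) ℂ) :
    frobNorm A ^ 2 = ((Aᴴ * A).trace).re := by
  rw [frobNorm, Real.sq_sqrt, frob_sq_eq]
  exact Finset.sum_nonneg fun i _ => Finset.sum_nonneg fun j _ => sq_nonneg _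

lemma frobNorm_conjTranspose {a b : ℕ} (A : Matrix (Fin a) (Fin b) ℂ) :
    frobNorm Aᴴ = frobNorm A := by
  rw [frobNorm, frobNorm, Finset.sum_comm]
  simp [Matrix.conjTranspose_apply]

lemma frobNorm_sub_comm {a b : ℕ} (A B : Matrix (Fin a) (Fin b) ℂ) :
    frobNorm (A - B) = frobNorm (B - A) := by
  simp only [frobNorm, Matrix.sub_apply, norm_sub_rev]

lemma key_mul_left {k b : ℕ} {M : Matrix (Fin k) (Fin k) ℂ} (c : ℝ) (hc : 0 ≤ c)
    (h : (((c^2 : ℝ) : ℂ) • 1 - Mᴴ * M).PosSemidef) (N : Matrix (Fin k) (Fin b) ℂ) :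
    frobNorm (M * N) ≤ c * frobNorm N := by
  have h2 := trace_psd_re_nonneg (h.conjTranspose_mul_mul_same N)
  have h3 : Nᴴ * (((c^2 : ℝ) : ℂ) • 1 - Mᴴ * M) * N
      = ((c^2 : ℝ) : ℂ) • (Nᴴ * N) - (M * N)ᴴ * (M * N) := by
    rw [Matrix.mul_sub, Matrix.sub_mul, Matrix.conjTranspose_mul]
    rw [Matrix.mul_smul, Matrix.smul_mul, Matrix.mul_one]
    simp only [Matrix.mul_assoc]
  rw [h3] at h2
  rw [Matrix.trace_sub, Matrix.trace_smul, Complex.sub_re, smul_eq_mul,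
    Complex.re_ofReal_mul, sub_nonneg] at h2
  have h4 : frobNorm (M * N) ^ 2 ≤ (c * frobNorm N) ^ 2 := by
    rw [frobNorm_sq, mul_pow, frobNorm_sq]
    exact h2
  exact (pow_le_pow_iff_left₀ (frobNorm_nonneg' _) (mul_nonneg hc (frobNorm_nonneg' _))
    (by norm_num)).mp h4

lemma key_mul_right {k b : ℕ} {P : Matrix (Fin k) (Fin k) ℂ} (c : ℝ) (hc : 0 ≤ c)
    (h : (((c^2 : ℝ) : ℂ) • 1 - P * Pᴴ).PosSemidef) (N : Matrix (Fin b) (Fin k) ℂ) :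
    frobNorm (N * P) ≤ frobNorm N * c := by
  have h' : (((c^2 : ℝ) : ℂ) • 1 - (Pᴴ)ᴴ * Pᴴ).PosSemidef := by
    rwa [Matrix.conjTranspose_conjTranspose]
  have h2 := key_mul_left c hc h' Nᴴ
  rw [← frobNorm_conjTranspose (N * P), Matrix.conjTranspose_mul]
  rw [frobNorm_conjTranspose] at h2
  linarith [h2, mul_comm c (frobNorm N)]

lemma unitary_conj_diag_psd {k : ℕ} (U : Matrix.unitaryGroup (Fin k) ℂ) (f : Fin k → ℝ)
    (c : ℝ) (h : ∀ i, f i ≤ c) :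
    ((c : ℂ) • 1 - (U : Matrix (Fin k) (Fin k) ℂ) *
        Matrix.diagonal (fun i => (f i : ℂ)) *
      star (U : Matrix (Fin k) (Fin k) ℂ)).PosSemidef := by
  have h1 : (c : ℂ) • (1 : Matrix (Fin k) (Fin k) ℂ)
      = (U : Matrix (Fin k) (Fin k) ℂ) * ((c : ℂ) • 1) * star (U : Matrix (Fin k) (Fin k) ℂ) := by
    rw [Matrix.mul_smul, Matrix.mul_one, Matrix.smul_mul,
      Matrix.mem_unitaryGroup_iff.mp U.2]
  rw [h1, ← Matrix.sub_mul, ← Matrix.mul_sub]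
  have h2 : (c : ℂ) • (1 : Matrix (Fin k) (Fin k) ℂ) - Matrix.diagonal (fun i => (f i : ℂ))
      = Matrix.diagonal (fun i => ((c - f i : ℝ) : ℂ)) := by
    ext i j
    rcases eq_or_ne i j with rfl | hne
    · simp [Matrix.one_apply, Matrix.diagonal_apply]
    · simp [Matrix.one_apply, Matrix.diagonal_apply, hne]
  rw [h2, Matrix.star_eq_conjTranspose (U : Matrix (Fin k) (Fin k) ℂ)]
  refine Matrix.PosSemidef.mul_mul_conjTranspose_same ?_ _
  refine Matrix.PosSemidef.diagonal fun i => ?_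
  simpa using (Complex.zero_le_real.mpr (sub_nonneg.mpr (h i)))

lemma eig_le_of_psd {k : ℕ} {M : Matrix (Fin k) (Fin k) ℂ} (hM : M.IsHermitian) (c : ℝ)
    (h : ((c : ℂ) • 1 - M).PosSemidef) (i : Fin k) : hM.eigenvalues i ≤ c := by
  have h2 := h.re_dotProduct_nonneg ⇑(hM.eigenvectorBasis i)
  rw [Matrix.sub_mulVec, dotProduct_sub, map_sub] at h2
  have hv : dotProduct (star ⇑(hM.eigenvectorBasis i)) ⇑(hM.eigenvectorBasis i) = 1 := by
    rw [dotProduct_comm, ← EuclideanSpace.inner_eq_star_dotProduct, inner_self_eq_norm_sq_to_K,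
      hM.eigenvectorBasis.orthonormal.1 i]
    norm_num
  rw [Matrix.smul_mulVec, Matrix.one_mulVec, dotProduct_smul, smul_eq_mul, hv, mul_one,
    ← hM.eigenvalues_eq i, sub_nonneg] at h2
  simpa using h2

lemma smul_one_sub_psd {k : ℕ} {G : Matrix (Fin k) (Fin k) ℂ} (hG : G.IsHermitian) (c : ℝ)
    (h : ∀ i, hG.eigenvalues i ≤ c) : ((c : ℂ) • 1 - G).PosSemidef := by
  have h1 := unitary_conj_diag_psd hG.eigenvectorUnitary hG.eigenvalues c h
  rw [hG.spectral_theorem]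
  exact h1

lemma smul_one_sub_sq_psd {k : ℕ} {M : Matrix (Fin k) (Fin k) ℂ} (hM : M.PosSemidef) (c : ℝ)
    (h : ∀ i, hM.1.eigenvalues i ≤ c) :
    (((c ^ 2 : ℝ) : ℂ) • 1 - M * M).PosSemidef := by
  have hMM : M * M = (hM.1.eigenvectorUnitary : Matrix (Fin k) (Fin k) ℂ) *
      Matrix.diagonal (fun i => ((hM.1.eigenvalues i ^ 2 : ℝ) : ℂ)) *
      star (hM.1.eigenvectorUnitary : Matrix (Fin k) (Fin k) ℂ) := by
    conv_lhs => rw [hM.1.spectral_theorem, Unitary.conjStarAlgAut_apply]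
    simp only [Matrix.mul_assoc]
    rw [← Matrix.mul_assoc (star (hM.1.eigenvectorUnitary : Matrix (Fin k) (Fin k) ℂ))
        (hM.1.eigenvectorUnitary : Matrix (Fin k) (Fin k) ℂ),
      Matrix.mem_unitaryGroup_iff'.mp hM.1.eigenvectorUnitary.2, Matrix.one_mul,
      ← Matrix.mul_assoc (Matrix.diagonal _) (Matrix.diagonal _), Matrix.diagonal_mul_diagonal]
    congr 2
    funext i
    simp [Function.comp, pow_two]
  rw [hMM]
  exact unitary_conj_diag_psd _ _ _ fun i =>
    pow_le_pow_left₀ (hM.eigenvalues_nonneg i) (h i) 2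

lemma one_sub_inv_psd {k : ℕ} {A : Matrix (Fin k) (Fin k) ℂ} (hA : A.PosDef)
    (h1 : (A - 1).PosSemidef) : ((1 : Matrix (Fin k) (Fin k) ℂ) - A⁻¹).PosSemidef := by
  have hdA : IsUnit A.det := (Matrix.isUnit_iff_isUnit_det _).mp hA.isUnit
  have hAinv : A⁻¹.PosDef := hA.inv
  obtain ⟨S, hSpsd, hSS⟩ : ∃ S : Matrix (Fin k) (Fin k) ℂ, S.PosSemidef ∧ S * S = A⁻¹ := by
    open scoped MatrixOrder in
    exact ⟨CFC.sqrt A⁻¹, Matrix.nonneg_iff_posSemidef.mp (CFC.sqrt_nonneg _),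
      CFC.sqrt_mul_sqrt_self _ (Matrix.nonneg_iff_posSemidef.mpr hAinv.posSemidef)⟩
  have hdS : IsUnit S.det := by
    have : IsUnit (S.det * S.det) := by
      rw [← Matrix.det_mul, hSS]
      exact (Matrix.isUnit_iff_isUnit_det _).mp hA.inv.isUnit
    exact isUnit_of_mul_isUnit_left this
  have hAeq : A = S⁻¹ * S⁻¹ := by
    rw [← Matrix.mul_inv_rev, hSS, Matrix.nonsing_inv_nonsing_inv _ hdA]
  have hSAS : S * A * S = 1 := by
    rw [hAeq, Matrix.mul_assoc, Matrix.mul_assoc, Matrix.nonsing_inv_mul _ hdS, Matrix.mul_one,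
      Matrix.mul_nonsing_inv _ hdS]
  have h2 := h1.conjTranspose_mul_mul_same S
  have h3 : Sᴴ * (A - 1) * S = 1 - A⁻¹ := by
    rw [hSpsd.1, Matrix.mul_sub, Matrix.sub_mul, hSAS, Matrix.mul_one, hSS]
  rwa [h3] at h2

/-- For `A = Hbar + Hᴴ Z H` as in the theorem, `A` is positive definite. -/
lemma main_posDef {n m : ℕ} (H : Matrix (Fin n) (Fin m) ℂ)
    (Hbar : Matrix (Fin m) (Fin m) ℂ) (hHbar : (Hbar - 1).PosSemidef)
    {Z : Matrix (Fin n) (Fin n) ℂ} (hZ : Z.PosSemidef) :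
    (Hbar + Hᴴ * Z * H).PosDef := by
  have h1 : Hbar + Hᴴ * Z * H = 1 + ((Hbar - 1) + Hᴴ * Z * H) := by abel
  rw [h1]
  exact Matrix.PosDef.add_posSemidef Matrix.PosDef.one
    (hHbar.add (hZ.conjTranspose_mul_mul_same H))

/-- The matrix `H A⁻¹ Hᴴ` is psd with `(λ²·1 - (H A⁻¹ Hᴴ)ᴴ (H A⁻¹ Hᴴ))` psd. -/
lemma main_sq_bound {n m : ℕ} (H : Matrix (Fin n) (Fin m) ℂ)
    {A : Matrix (Fin m) (Fin m) ℂ} (hA : A.PosDef) (hA1 : (A - 1).PosSemidef) :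
    (((lambdaMaxHHH H ^ 2 : ℝ) : ℂ) • 1
      - (H * A⁻¹ * Hᴴ)ᴴ * (H * A⁻¹ * Hᴴ)).PosSemidef := by
  classical
  set lam := lambdaMaxHHH H with hlam
  have hG : (H * Hᴴ).IsHermitian := Matrix.isHermitian_mul_conjTranspose_self H
  have heig : ∀ i, hG.eigenvalues i ≤ lam := fun i =>
    le_ciSup (Set.Finite.bddAbove (Set.finite_range _)) i
  have hMpsd : (H * A⁻¹ * Hᴴ).PosSemidef :=
    hA.inv.posSemidef.mul_mul_conjTranspose_same H
  have hG1 : ((lam : ℂ) • 1 - H * Hᴴ).PosSemidef := smul_one_sub_psd hG lam heig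
  have hGM : (H * Hᴴ - H * A⁻¹ * Hᴴ).PosSemidef := by
    have h2 := (one_sub_inv_psd hA hA1).mul_mul_conjTranspose_same H
    have h3 : H * (1 - A⁻¹) * Hᴴ = H * Hᴴ - H * A⁻¹ * Hᴴ := by
      rw [Matrix.mul_sub, Matrix.mul_one, Matrix.sub_mul]
    rwa [h3] at h2
  have hM1 : ((lam : ℂ) • 1 - H * A⁻¹ * Hᴴ).PosSemidef := by
    have h4 := hG1.add hGM
    rwa [sub_add_sub_cancel] at h4
  have heigM : ∀ i, hMpsd.1.eigenvalues i ≤ lam :=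
    eig_le_of_psd hMpsd.1 lam hM1
  have h5 := smul_one_sub_sq_psd hMpsd lam heigM
  rw [hMpsd.1.eq]
  exact h5

lemma lambdaMaxHHH_nonneg {n m : ℕ} (H : Matrix (Fin n) (Fin m) ℂ) :
    0 ≤ lambdaMaxHHH H := by
  rcases isEmpty_or_nonempty (Fin n) with he | hne
  · rw [lambdaMaxHHH, Real.iSup_of_isEmpty]
  · obtain ⟨i⟩ := hne
    exact le_trans ((Matrix.posSemidef_self_mul_conjTranspose H).eigenvalues_nonneg i)
      (le_ciSup (Set.Finite.bddAbove (Set.finite_range _)) i)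

/-- Let `H ∈ ℂ^{n×m}`, `H̄ ∈ ℂ^{m×m}` Hermitian with `H̄ − I` positive
semidefinite, and `X, Y ∈ ℂ^{n×n}` Hermitian positive semidefinite. Then
`H̄ + Hᴴ X H` and `H̄ + Hᴴ Y H` are invertible and
`‖H (H̄ + Hᴴ X H)⁻¹ Hᴴ − H (H̄ + Hᴴ Y H)⁻¹ Hᴴ‖ ≤ λ_max(H Hᴴ)² ‖X − Y‖`
(Frobenius norms). -/
theorem partial_gradient_lipschitz {n m : ℕ} (H : Matrix (Fin n) (Fin m) ℂ)
    (Hbar : Matrix (Fin m) (Fin m) ℂ) (hHerm : Hbar.IsHermitian)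
    (hHbar : (Hbar - 1).PosSemidef)
    (X Y : Matrix (Fin n) (Fin n) ℂ) (hX : X.PosSemidef) (hY : Y.PosSemidef) :
    IsUnit (Hbar + Hᴴ * X * H) ∧ IsUnit (Hbar + Hᴴ * Y * H) ∧
    frobNorm (H * (Hbar + Hᴴ * X * H)⁻¹ * Hᴴ - H * (Hbar + Hᴴ * Y * H)⁻¹ * Hᴴ)
      ≤ lambdaMaxHHH H ^ 2 * frobNorm (X - Y) := by
  classical
  set A := Hbar + Hᴴ * X * H with hAdef
  set B := Hbar + Hᴴ * Y * H with hBdef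
  have hA : A.PosDef := main_posDef H Hbar hHbar hX
  have hB : B.PosDef := main_posDef H Hbar hHbar hY
  have hA1 : (A - 1).PosSemidef := by
    have : A - 1 = (Hbar - 1) + Hᴴ * X * H := by rw [hAdef]; abel
    rw [this]; exact hHbar.add (hX.conjTranspose_mul_mul_same H)
  have hB1 : (B - 1).PosSemidef := by
    have : B - 1 = (Hbar - 1) + Hᴴ * Y * H := by rw [hBdef]; abel
    rw [this]; exact hHbar.add (hY.conjTranspose_mul_mul_same H)
  refine ⟨hA.isUnit, hB.isUnit, ?_⟩
  have hdA : IsUnit A.det := (Matrix.isUnit_iff_isUnit_det _).mp hA.isUnit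
  have hdB : IsUnit B.det := (Matrix.isUnit_iff_isUnit_det _).mp hB.isUnit
  set lam := lambdaMaxHHH H with hlam
  have hlam0 : 0 ≤ lam := lambdaMaxHHH_nonneg H
  -- the key identity
  have hiden : H * A⁻¹ * Hᴴ - H * B⁻¹ * Hᴴ
      = (H * A⁻¹ * Hᴴ) * ((Y - X) * (H * B⁻¹ * Hᴴ)) := by
    have e1 : Hᴴ * (Y - X) * H = B - A := by
      rw [Matrix.mul_sub, Matrix.sub_mul, hAdef, hBdef]
      abel
    have e2 : A⁻¹ * (B - A) * B⁻¹ = A⁻¹ - B⁻¹ := by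
      rw [Matrix.mul_sub, Matrix.sub_mul, Matrix.nonsing_inv_mul _ hdA,
        Matrix.mul_assoc, Matrix.mul_nonsing_inv _ hdB, Matrix.mul_one, Matrix.one_mul]
    calc H * A⁻¹ * Hᴴ - H * B⁻¹ * Hᴴ
        = H * (A⁻¹ - B⁻¹) * Hᴴ := by rw [Matrix.mul_sub, Matrix.sub_mul]
      _ = H * (A⁻¹ * (B - A) * B⁻¹) * Hᴴ := by rw [e2]
      _ = H * (A⁻¹ * (Hᴴ * (Y - X) * H) * B⁻¹) * Hᴴ := by rw [e1]
      _ = (H * A⁻¹ * Hᴴ) * ((Y - X) * (H * B⁻¹ * Hᴴ)) := by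
          simp only [Matrix.mul_assoc]
  rw [hiden]
  have hsqA := main_sq_bound H hA hA1
  have hsqB := main_sq_bound H hB hB1
  have hBherm : (H * B⁻¹ * Hᴴ)ᴴ = H * B⁻¹ * Hᴴ :=
    (hB.inv.posSemidef.mul_mul_conjTranspose_same H).1.eq
  have hsqB' : (((lam ^ 2 : ℝ) : ℂ) • 1
      - (H * B⁻¹ * Hᴴ) * (H * B⁻¹ * Hᴴ)ᴴ).PosSemidef := by
    rw [hBherm]
    rwa [hBherm] at hsqB
  have step1 : frobNorm ((H * A⁻¹ * Hᴴ) * ((Y - X) * (H * B⁻¹ * Hᴴ)))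
      ≤ lam * frobNorm ((Y - X) * (H * B⁻¹ * Hᴴ)) :=
    key_mul_left lam hlam0 hsqA _
  have step2 : frobNorm ((Y - X) * (H * B⁻¹ * Hᴴ)) ≤ frobNorm (Y - X) * lam :=
    key_mul_right lam hlam0 hsqB' _
  have hYX : frobNorm (Y - X) = frobNorm (X - Y) := frobNorm_sub_comm Y X
  calc frobNorm ((H * A⁻¹ * Hᴴ) * ((Y - X) * (H * B⁻¹ * Hᴴ)))
      ≤ lam * frobNorm ((Y - X) * (H * B⁻¹ * Hᴴ)) := step1
    _ ≤ lam * (frobNorm (Y - X) * lam) :=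
        mul_le_mul_of_nonneg_left step2 hlam0
    _ = lam ^ 2 * frobNorm (X - Y) := by rw [hYX]; ring
end

section
/- Let K be a positive integer, μ > 0, P > 0, and H_k ∈ ℂ^{n_k×N_t} for k = 1,…,K. Let S̄_k ∈ ℂ^{n_k×n_k} be Hermitian positive semidefinite with Σ_{k=1}^K tr(S̄_k) = P. For each k set H̄_k = I_{N_t} + Σ_{j≠k} H_jᴴ S̄_j H_j (a Hermitian positive definite matrix) and let H̄_k^{-1/2} denote the inverse of its unique Hermitian positive definite square root. Suppose that for every k the stationarity identity H_k H̄_k^{-1/2} ( I_{N_t} + H̄_k^{-1/2} H_kᴴ S̄_k H_k H̄_k^{-1/2} )⁻¹ H̄_k^{-1/2} H_kᴴ S̄_k = μ S̄_k holds. Then μ ≤ K N_t / P. -/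
open Matrix
open scoped ComplexOrder

lemma trace_nonneg_of_posSemidef {m : Type*} [Fintype m] [DecidableEq m]
    {M : Matrix m m ℂ} (hM : M.PosSemidef) : 0 ≤ M.trace := by
  rw [Matrix.trace]
  refine Finset.sum_nonneg fun i _ => ?_
  have := hM.dotProduct_mulVec_nonneg (Pi.single i 1)
  simpa [Matrix.diag, dotProduct, Pi.single_apply, Matrix.mulVec] using this

/-- Upper bound on the Lagrange multiplier. Let `μ > 0`, `P > 0`,
`H_k ∈ ℂ^{n_k×N_t}`, and `S̄_k` Hermitian PSD with `Σ_k tr(S̄_k) = P`. Let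
`H̄_k = I + Σ_{j≠k} H_jᴴ S̄_j H_j` and let `R_k = H̄_k^{-1/2}` be the inverse of its unique
Hermitian positive definite square root (characterized by `R_k` PD and `R_k R_k H̄_k = I`).
If the KKT stationarity identity
`H_k R_k (I + R_k H_kᴴ S̄_k H_k R_k)⁻¹ R_k H_kᴴ S̄_k = μ S̄_k` holds for every `k`,
then `μ ≤ K N_t / P`. -/
theorem mu_upper_bound {K Nt : ℕ} (hK : 0 < K) {n : Fin K → ℕ}
    (μ P : ℝ) (hμ : 0 < μ) (hP : 0 < P)
    (H : ∀ k : Fin K, Matrix (Fin (n k)) (Fin Nt) ℂ)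
    (Sb : ∀ k : Fin K, Matrix (Fin (n k)) (Fin (n k)) ℂ)
    (hSb : ∀ k, (Sb k).PosSemidef)
    (htr : (∑ k, (Sb k).trace) = (P : ℂ))
    (R : Fin K → Matrix (Fin Nt) (Fin Nt) ℂ)
    (hRpd : ∀ k, (R k).PosDef)
    (hRsq : ∀ k,
      R k * R k * (1 + ∑ j ∈ Finset.univ.erase k, (H j)ᴴ * Sb j * H j) = 1)
    (hstat : ∀ k,
      H k * R k * (1 + R k * (H k)ᴴ * Sb k * H k * R k)⁻¹ * R k * (H k)ᴴ * Sb k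
        = (μ : ℂ) • Sb k) :
    μ ≤ (K : ℝ) * Nt / P := by
  -- per-user bound: μ * tr(S̄_k) ≤ Nt
  have key : ∀ k, (μ : ℂ) * (Sb k).trace ≤ (Nt : ℂ) := by
    intro k
    set A : Matrix (Fin Nt) (Fin Nt) ℂ := R k * (H k)ᴴ * Sb k * H k * R k with hAdef
    -- A is PSD
    have hA : A.PosSemidef := by
      have h1 : ((H k)ᴴ * Sb k * H k).PosSemidef :=
        (hSb k).conjTranspose_mul_mul_same (H k)
      have h2 := h1.mul_mul_conjTranspose_same (R k)
      rw [(hRpd k).isHermitian.eq] at h2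
      have : A = R k * ((H k)ᴴ * Sb k * H k) * R k := by
        simp [hAdef, Matrix.mul_assoc]
      rwa [this]
    have hIA : (1 + A).PosDef := Matrix.PosDef.one.add_posSemidef hA
    have hIAdet : IsUnit (1 + A).det := (Matrix.isUnit_iff_isUnit_det _).mp hIA.isUnit
    set X : Matrix (Fin Nt) (Fin Nt) ℂ := (1 + A)⁻¹ with hXdef
    have hX : X.PosSemidef := hIA.inv.posSemidef
    -- trace of the stationarity identity
    have htr1 := congrArg Matrix.trace (hstat k)
    have hLHS : (H k * R k * X * R k * (H k)ᴴ * Sb k).trace = (A * X).trace := by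
      have : H k * R k * X * R k * (H k)ᴴ * Sb k
          = (H k * R k * X) * (R k * (H k)ᴴ * Sb k) := by
        simp [Matrix.mul_assoc]
      rw [this, Matrix.trace_mul_comm]
      congr 1
      simp [hAdef, Matrix.mul_assoc]
    have hAX : A * X = 1 - X := by
      have h1 : (1 + A) * X = 1 := Matrix.mul_nonsing_inv _ hIAdet
      calc A * X = (1 + A) * X - 1 * X := by rw [add_mul, one_mul]; abel
        _ = 1 - X := by rw [h1, one_mul]
    rw [hLHS, hAX] at htr1
    have hXtr : 0 ≤ X.trace := trace_nonneg_of_posSemidef hX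
    have heq : (μ : ℂ) * (Sb k).trace = (Nt : ℂ) - X.trace := by
      calc (μ : ℂ) * (Sb k).trace = ((μ : ℂ) • Sb k).trace := by
            rw [Matrix.trace_smul, smul_eq_mul]
        _ = (1 - X).trace := htr1.symm
        _ = (Nt : ℂ) - X.trace := by
            rw [Matrix.trace_sub, Matrix.trace_one]
            simp
    rw [heq]
    exact sub_le_self _ hXtr
  -- sum over k
  have hsum : (μ : ℂ) * (P : ℂ) ≤ (K : ℂ) * (Nt : ℂ) := by
    calc (μ : ℂ) * (P : ℂ) = ∑ k, (μ : ℂ) * (Sb k).trace := by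
          rw [← htr, Finset.mul_sum]
      _ ≤ ∑ _k : Fin K, (Nt : ℂ) := Finset.sum_le_sum fun k _ => key k
      _ = (K : ℂ) * (Nt : ℂ) := by simp [mul_comm]
  have hreal : μ * P ≤ (K : ℝ) * Nt := by
    have := hsum
    rw [show (μ : ℂ) * (P : ℂ) = ((μ * P : ℝ) : ℂ) by push_cast; ring,
      show (K : ℂ) * (Nt : ℂ) = (((K : ℝ) * Nt : ℝ) : ℂ) by push_cast; ring] at this
    exact_mod_cast this
  rw [le_div_iff₀ hP]
  exact hreal
end

section
/- Let H ∈ ℂ^{n×m}, let H̄ ∈ ℂ^{m×m} be Hermitian positive definite, and let μ > 0. Let H H̄⁻¹ Hᴴ = V diag(σ_1,…,σ_n) Vᴴ be a spectral decomposition with V ∈ ℂ^{n×n} unitary and σ_i ≥ 0. Define S* = V diag(d_1,…,d_n) Vᴴ, where d_i = max(1/μ − 1/σ_i, 0) if σ_i > 0 and d_i = 0 if σ_i = 0. Then S* is Hermitian positive semidefinite and, for every Hermitian positive semidefinite S ∈ ℂ^{n×n}, ln det( I_m + H̄^{-1/2} Hᴴ S H H̄^{-1/2} ) − μ tr(S)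 ≤ ln det( I_m + H̄^{-1/2} Hᴴ S* H H̄^{-1/2} ) − μ tr(S*); that is, the water-filling matrix S* globally maximizes this objective over the positive semidefinite cone. -/
open Matrix
open scoped ComplexOrder

/-- AM-GM: nonneg reals with sum k have product ≤ 1. -/
lemma wf_prod_le_one {k : ℕ} (l : Fin k → ℝ) (h0 : ∀ i, 0 ≤ l i)
    (hs : ∑ i, l i = k) : ∏ i, l i ≤ 1 := by
  rcases Nat.eq_zero_or_pos k with hk | hk
  · subst hk; simp
  have hk' : (0:ℝ) < k := by exact_mod_cast hk
  have hw : ∑ _i : Fin k, (k:ℝ)⁻¹ = 1 := by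
    simp [Finset.sum_const]
    field_simp
  have hgm := Real.geom_mean_le_arith_mean_weighted Finset.univ (fun _ => (k:ℝ)⁻¹) l
    (fun i _ => by positivity) hw (fun i _ => h0 i)
  have hsum : ∑ i : Fin k, (k:ℝ)⁻¹ * l i = 1 := by
    rw [← Finset.mul_sum, hs]
    field_simp
  rw [hsum] at hgm
  have hle : (∏ i, l i ^ ((k:ℝ)⁻¹)) ^ (k:ℕ) ≤ 1 := by
    apply pow_le_one₀ _ hgm
    exact Finset.prod_nonneg fun i _ => Real.rpow_nonneg (h0 i) _
  calc ∏ i, l i = (∏ i, l i ^ ((k:ℝ)⁻¹)) ^ (k:ℕ) := by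
        rw [← Finset.prod_pow]
        refine Finset.prod_congr rfl fun i _ => ?_
        rw [← Real.rpow_natCast (l i ^ ((k:ℝ)⁻¹)) k, ← Real.rpow_mul (h0 i),
          inv_mul_cancel₀ (ne_of_gt hk'), Real.rpow_one]
    _ ≤ 1 := hle

/-- Trace of a Hermitian matrix is the sum of its eigenvalues. -/
lemma wf_trace_eq_sum_eigen {k : ℕ} {N : Matrix (Fin k) (Fin k) ℂ} (hN : N.IsHermitian) :
    N.trace = ∑ i, (hN.eigenvalues i : ℂ) := by
  conv_lhs => rw [hN.spectral_theorem]
  rw [Unitary.conjStarAlgAut_apply, Matrix.trace_mul_cycle]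
  rw [show (star (hN.eigenvectorUnitary : Matrix (Fin k) (Fin k) ℂ)) *
      (hN.eigenvectorUnitary : Matrix (Fin k) (Fin k) ℂ) = 1 from
    Matrix.mem_unitaryGroup_iff'.mp hN.eigenvectorUnitary.2]
  rw [one_mul, Matrix.trace_diagonal]
  rfl

/-- Hadamard's determinant inequality for PSD matrices with positive diagonal. -/
lemma wf_hadamard {k : ℕ} {M : Matrix (Fin k) (Fin k) ℂ} (hM : M.PosSemidef)
    (hd : ∀ i, 0 < (M i i).re) : M.det.re ≤ ∏ i, (M i i).re := by
  set c : Fin k → ℝ := fun i => (M i i).re with hc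
  have hMii : ∀ i, M i i = (c i : ℂ) := fun i => (hM.1.coe_re_apply_self i).symm
  set e : Fin k → ℝ := fun i => (Real.sqrt (c i))⁻¹ with he
  have hepos : ∀ i, 0 < e i := fun i => inv_pos.2 (Real.sqrt_pos.2 (hd i))
  set Dm : Matrix (Fin k) (Fin k) ℂ := Matrix.diagonal (fun i => (e i : ℂ)) with hDm
  have hDmH : Dmᴴ = Dm := by
    rw [hDm, Matrix.diagonal_conjTranspose]
    congr 1
    funext i
    simp [Pi.star_def, Complex.conj_ofReal]
  have hN : (Dm * M * Dmᴴ).PosSemidef := hM.mul_mul_conjTranspose_same Dm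
  rw [hDmH] at hN
  set N : Matrix (Fin k) (Fin k) ℂ := Dm * M * Dm with hNdef
  have hecsq : ∀ i, e i * e i * c i = 1 := by
    intro i
    have h1 : Real.sqrt (c i) * Real.sqrt (c i) = c i := Real.mul_self_sqrt (hd i).le
    rw [he]
    dsimp only
    rw [← mul_inv, h1]
    exact inv_mul_cancel₀ (hd i).ne'
  have hNii1 : ∀ i, N i i = 1 := by
    intro i
    have hstep : N i i = (e i : ℂ) * M i i * (e i : ℂ) := by
      rw [hNdef, hDm, Matrix.mul_diagonal, Matrix.diagonal_mul]
    have h2 : ((e i * c i * e i : ℝ) : ℂ) = 1 := by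
      rw [show e i * c i * e i = e i * e i * c i from by ring, hecsq i]
      norm_num
    rw [hstep, hMii i]
    exact_mod_cast h2
  have htr : N.trace = (k : ℂ) := by
    rw [Matrix.trace]
    simp [Matrix.diag, hNii1]
  have heig := wf_trace_eq_sum_eigen hN.1
  have hsum : ∑ i, hN.1.eigenvalues i = k := by
    have h2 : ((∑ i, hN.1.eigenvalues i : ℝ) : ℂ) = (k : ℂ) := by
      push_cast
      rw [← heig, htr]
    exact_mod_cast h2
  have hprodeig : ∏ i, hN.1.eigenvalues i ≤ 1 :=
    wf_prod_le_one _ (fun i => hN.eigenvalues_nonneg i) hsum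
  have hprodeig_nn : 0 ≤ ∏ i, hN.1.eigenvalues i :=
    Finset.prod_nonneg fun i _ => hN.eigenvalues_nonneg i
  have hdetN : N.det = ((∏ i, hN.1.eigenvalues i : ℝ) : ℂ) := by
    rw [hN.1.det_eq_prod_eigenvalues]
    push_cast
    rfl
  have key : (∏ i, ((e i : ℝ) : ℂ)) * (∏ i, ((e i : ℝ) : ℂ)) * ((∏ i, c i : ℝ) : ℂ) = 1 := by
    push_cast
    rw [← Finset.prod_mul_distrib, ← Finset.prod_mul_distrib]
    apply Finset.prod_eq_one
    intro i _
    exact_mod_cast congrArg (Complex.ofReal) (hecsq i)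
  have hNdet : N.det = (∏ i, ((e i : ℝ) : ℂ)) * M.det * (∏ i, ((e i : ℝ) : ℂ)) := by
    rw [hNdef, Matrix.det_mul, Matrix.det_mul, Matrix.det_diagonal]
  have hdetM : M.det = N.det * ((∏ i, c i : ℝ) : ℂ) := by
    rw [hNdet]
    linear_combination -M.det * key
  have hfin : M.det = (((∏ i, hN.1.eigenvalues i) * (∏ i, c i) : ℝ) : ℂ) := by
    rw [hdetM, hdetN]
    push_cast
    ring
  rw [hfin, Complex.ofReal_re]
  have hcpos : 0 ≤ ∏ i, c i := Finset.prod_nonneg fun i _ => (hd i).le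
  nlinarith [hprodeig, hcpos, hprodeig_nn]

/-- Scalar water-filling optimality. -/
lemma wf_scalar {σ μ t : ℝ} (hσ : 0 ≤ σ) (hμ : 0 < μ) (ht : 0 ≤ t) :
    Real.log (1 + σ * t) - μ * t ≤
    Real.log (1 + σ * (if 0 < σ then max (1/μ - 1/σ) 0 else 0))
      - μ * (if 0 < σ then max (1/μ - 1/σ) 0 else 0) := by
  by_cases hσ0 : 0 < σ
  · simp only [if_pos hσ0]
    by_cases hcase : 1/μ - 1/σ ≤ 0
    · rw [max_eq_right hcase]
      have h1t : (0:ℝ) < 1 + σ * t := by positivity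
      have h1 : Real.log (1 + σ * t) ≤ σ * t := by
        have := Real.log_le_sub_one_of_pos h1t
        linarith
      have hσμ : σ ≤ μ := le_of_one_div_le_one_div hμ (by linarith)
      have h2 : σ * t ≤ μ * t := mul_le_mul_of_nonneg_right hσμ ht
      simp only [mul_zero, add_zero, Real.log_one, sub_zero]
      linarith
    · push_neg at hcase
      rw [max_eq_left hcase.le]
      have hd' : 1 + σ * (1/μ - 1/σ) = σ/μ := by field_simp; ring
      rw [hd']
      have h1t : (0:ℝ) < 1 + σ * t := by positivity
      have hμσ : (0:ℝ) < μ/σ := by positivity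
      have hpos : (0:ℝ) < (1 + σ*t) * (μ/σ) := by positivity
      have hlog := Real.log_le_sub_one_of_pos hpos
      rw [Real.log_mul h1t.ne' hμσ.ne'] at hlog
      have hlogdiv : Real.log (μ/σ) = -Real.log (σ/μ) := by
        rw [Real.log_div hμ.ne' hσ0.ne', Real.log_div hσ0.ne' hμ.ne']
        ring
      have hexp : (1 + σ*t) * (μ/σ) = μ/σ + μ*t := by
        field_simp
      rw [hlogdiv, hexp] at hlog
      have hμd : μ * (1/μ - 1/σ) = 1 - μ/σ := by field_simp
      rw [hμd]
      linarith
  · have hσ' : σ = 0 := le_antisymm (not_lt.mp hσ0) hσ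
    rw [if_neg hσ0, hσ']
    simp only [zero_mul, add_zero, Real.log_one, mul_zero, sub_zero, zero_sub]
    have : 0 ≤ μ * t := mul_nonneg hμ.le ht
    linarith

/-- The water-filling matrix `S* = V diag(d) Vᴴ`, where `d_i = max(1/μ − 1/σ_i, 0)` if
`σ_i > 0` and `d_i = 0` otherwise. -/
noncomputable def waterfillMatrix {n : ℕ} (V : Matrix (Fin n) (Fin n) ℂ)
    (σ : Fin n → ℝ) (μ : ℝ) : Matrix (Fin n) (Fin n) ℂ :=
  V * Matrix.diagonal
      (fun i => ((if 0 < σ i then max (1 / μ - 1 / σ i) 0 else 0 : ℝ) : ℂ)) * Vᴴ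

/-- Optimality of water-filling. Let `H ∈ ℂ^{n×m}`, `H̄ ∈ ℂ^{m×m}` Hermitian
positive definite, `μ > 0`, and let `H H̄⁻¹ Hᴴ = V diag(σ) Vᴴ` be a spectral decomposition
with `V` unitary and `σ_i ≥ 0`. With `R = H̄^{-1/2}` (the inverse of the unique Hermitian
PD square root of `H̄`), the water-filling matrix `S*` is Hermitian PSD and maximizes
`S ↦ ln det(I + R Hᴴ S H R) − μ tr(S)` over all Hermitian PSD `S`. -/
theorem waterfilling_optimal {n m : ℕ} (H : Matrix (Fin n) (Fin m) ℂ)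
    (Hbar : Matrix (Fin m) (Fin m) ℂ) (hHbar : Hbar.PosDef)
    (μ : ℝ) (hμ : 0 < μ)
    (R : Matrix (Fin m) (Fin m) ℂ) (hRpd : R.PosDef) (hRsq : R * R = Hbar⁻¹)
    (V : Matrix (Fin n) (Fin n) ℂ) (hV : V ∈ Matrix.unitaryGroup (Fin n) ℂ)
    (σ : Fin n → ℝ) (hσ : ∀ i, 0 ≤ σ i)
    (hdecomp : H * Hbar⁻¹ * Hᴴ = V * Matrix.diagonal (fun i => (σ i : ℂ)) * Vᴴ) :
    (waterfillMatrix V σ μ).PosSemidef ∧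
    ∀ S : Matrix (Fin n) (Fin n) ℂ, S.PosSemidef →
      Real.log ((1 + R * Hᴴ * S * H * R).det).re - μ * (S.trace).re ≤
      Real.log ((1 + R * Hᴴ * waterfillMatrix V σ μ * H * R).det).re
        - μ * ((waterfillMatrix V σ μ).trace).re := by

  -- basic notation
  set d : Fin n → ℝ := fun i => if 0 < σ i then max (1/μ - 1/σ i) 0 else 0 with hd_def
  have hdnn : ∀ i, 0 ≤ d i := by
    intro i
    rw [hd_def]
    dsimp only
    split
    · exact le_max_right _ _
    · exact le_refl 0
  have hwf_eq : waterfillMatrix V σ μ = V * Matrix.diagonal (fun i => ((d i : ℝ) : ℂ)) * Vᴴ := rfl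
  have hDd_psd : (Matrix.diagonal (fun i => ((d i : ℝ) : ℂ))).PosSemidef :=
    Matrix.posSemidef_diagonal_iff.mpr fun i => Complex.zero_le_real.mpr (hdnn i)
  have hSstar : (waterfillMatrix V σ μ).PosSemidef := by
    rw [hwf_eq]
    simpa using hDd_psd.mul_mul_conjTranspose_same V
  refine ⟨hSstar, ?_⟩
  -- unitary facts
  have hVV : Vᴴ * V = 1 := by
    have := Matrix.mem_unitaryGroup_iff'.mp hV
    simpa [Matrix.star_eq_conjTranspose] using this
  have hVV' : V * Vᴴ = 1 := by
    have := Matrix.mem_unitaryGroup_iff.mp hV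
    simpa [Matrix.star_eq_conjTranspose] using this
  -- determinant chain
  have chain : ∀ S : Matrix (Fin n) (Fin n) ℂ,
      (1 + R * Hᴴ * S * H * R).det
        = (1 + Vᴴ * S * V * Matrix.diagonal (fun i => (σ i : ℂ))).det := by
    intro S
    have hHH : H * (R * (R * Hᴴ)) = V * (Matrix.diagonal (fun i => (σ i : ℂ)) * Vᴴ) := by
      have h2 := hdecomp
      rw [← hRsq] at h2
      simpa [Matrix.mul_assoc] using h2
    calc (1 + R * Hᴴ * S * H * R).det
        = (1 + (R * Hᴴ) * (S * (H * R))).det := by rw [show R * Hᴴ * S * H * R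
            = (R * Hᴴ) * (S * (H * R)) from by simp only [Matrix.mul_assoc]]
      _ = (1 + (S * (H * R)) * (R * Hᴴ)).det := Matrix.det_one_add_mul_comm _ _
      _ = (1 + (S * (V * Matrix.diagonal (fun i => (σ i : ℂ)))) * Vᴴ).det := by
            rw [show (S * (H * R)) * (R * Hᴴ)
              = (S * (V * Matrix.diagonal (fun i => (σ i : ℂ)))) * Vᴴ from by
                simp only [Matrix.mul_assoc, hHH]]
      _ = (1 + Vᴴ * (S * (V * Matrix.diagonal (fun i => (σ i : ℂ))))).det :=
            Matrix.det_one_add_mul_comm _ _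
      _ = (1 + Vᴴ * S * V * Matrix.diagonal (fun i => (σ i : ℂ))).det := by
            simp only [Matrix.mul_assoc]
  -- square root of diag σ
  set E : Matrix (Fin n) (Fin n) ℂ := Matrix.diagonal (fun i => ((Real.sqrt (σ i) : ℝ) : ℂ))
    with hE
  have hEH : Eᴴ = E := by
    rw [hE, Matrix.diagonal_conjTranspose]
    congr 1
    funext i
    simp [Pi.star_def, Complex.conj_ofReal]
  have hEE : E * E = Matrix.diagonal (fun i => (σ i : ℂ)) := by
    have hfun : (fun i => ((Real.sqrt (σ i) : ℝ) : ℂ) * ((Real.sqrt (σ i) : ℝ) : ℂ))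
        = fun i => ((σ i : ℝ) : ℂ) := by
      funext i
      rw [← Complex.ofReal_mul, Real.mul_self_sqrt (hσ i)]
    rw [hE, Matrix.diagonal_mul_diagonal, hfun]
  -- general upper bound for PSD S
  have bound : ∀ S : Matrix (Fin n) (Fin n) ℂ, S.PosSemidef →
      Real.log ((1 + R * Hᴴ * S * H * R).det).re - μ * (S.trace).re ≤
      ∑ i, (Real.log (1 + σ i * ((Vᴴ * S * V) i i).re) - μ * ((Vᴴ * S * V) i i).re) := by
    intro S hS
    set T : Matrix (Fin n) (Fin n) ℂ := Vᴴ * S * V with hT_def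
    have hT : T.PosSemidef := by
      have := hS.mul_mul_conjTranspose_same Vᴴ
      simpa [hT_def] using this
    set t : Fin n → ℝ := fun i => (T i i).re with ht_def
    have hTii : ∀ i, T i i = ((t i : ℝ) : ℂ) := fun i => (hT.1.coe_re_apply_self i).symm
    have htnn : ∀ i, 0 ≤ t i := by
      intro i
      have h0 := hT.dotProduct_mulVec_nonneg (Pi.single i 1)
      simp [dotProduct, Matrix.mulVec_single, Pi.single_apply, Finset.sum_ite_eq] at h0
      rw [hTii i] at h0
      exact Complex.zero_le_real.mp h0
    -- matrix M
    set M : Matrix (Fin n) (Fin n) ℂ := 1 + E * (T * E) with hM_def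
    have hdet2 : (1 + T * Matrix.diagonal (fun i => (σ i : ℂ))).det = M.det := by
      rw [← hEE, hM_def]
      calc (1 + T * (E * E)).det = (1 + (T * E) * E).det := by simp only [Matrix.mul_assoc]
        _ = (1 + E * (T * E)).det := Matrix.det_one_add_mul_comm _ _
    have hETE : (E * (T * E)).PosSemidef := by
      have := hT.mul_mul_conjTranspose_same E
      rw [hEH] at this
      simpa [Matrix.mul_assoc] using this
    have hone : (1 : Matrix (Fin n) (Fin n) ℂ).PosDef := by
      exact Matrix.PosDef.one
    have hMpd : M.PosDef := hone.add_posSemidef hETE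
    have hMii : ∀ i, M i i = ((1 + σ i * t i : ℝ) : ℂ) := by
      intro i
      rw [hM_def, Matrix.add_apply, Matrix.one_apply_eq, hE, Matrix.diagonal_mul,
        Matrix.mul_diagonal, hTii i]
      have hre : (1 : ℝ) + Real.sqrt (σ i) * (t i * Real.sqrt (σ i)) = 1 + σ i * t i := by
        rw [show Real.sqrt (σ i) * (t i * Real.sqrt (σ i))
          = Real.sqrt (σ i) * Real.sqrt (σ i) * t i from by ring, Real.mul_self_sqrt (hσ i)]
      exact_mod_cast congrArg Complex.ofReal hre
    have hMiipos : ∀ i, 0 < (M i i).re := by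
      intro i
      rw [hMii i, Complex.ofReal_re]
      have := mul_nonneg (hσ i) (htnn i)
      linarith
    have hhad := wf_hadamard hMpd.posSemidef hMiipos
    have hprod_eq : ∏ i, (M i i).re = ∏ i, (1 + σ i * t i) := by
      apply Finset.prod_congr rfl
      intro i _
      rw [hMii i, Complex.ofReal_re]
    have hdetpos : 0 < M.det.re := by
      have := hMpd.det_pos
      exact (Complex.lt_def.mp this).1
    -- determinant value
    have hdets : ((1 + R * Hᴴ * S * H * R).det).re = M.det.re := by
      rw [chain S, ← hT_def, hdet2]
    -- log inequality
    have hlog : Real.log ((1 + R * Hᴴ * S * H * R).det).re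
        ≤ ∑ i, Real.log (1 + σ i * t i) := by
      rw [hdets]
      calc Real.log M.det.re ≤ Real.log (∏ i, (1 + σ i * t i)) := by
            apply Real.log_le_log hdetpos
            rw [← hprod_eq]
            exact hhad
        _ = ∑ i, Real.log (1 + σ i * t i) := by
            apply Real.log_prod
            intro i _
            have := mul_nonneg (hσ i) (htnn i)
            positivity
    -- trace
    have htr : (S.trace).re = ∑ i, t i := by
      have h1 : S.trace = T.trace := by
        rw [hT_def, Matrix.trace_mul_cycle, hVV', one_mul]
      rw [h1, Matrix.trace]
      rw [show ∑ i, T.diag i = ((∑ i, t i : ℝ) : ℂ) from by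
        push_cast
        exact Finset.sum_congr rfl fun i _ => hTii i]
      exact Complex.ofReal_re _
    rw [htr]
    have hsum2 : ∑ i, (Real.log (1 + σ i * t i) - μ * t i)
        = (∑ i, Real.log (1 + σ i * t i)) - μ * ∑ i, t i := by
      rw [Finset.sum_sub_distrib, Finset.mul_sum]
    calc Real.log ((1 + R * Hᴴ * S * H * R).det).re - μ * ∑ i, t i
        ≤ (∑ i, Real.log (1 + σ i * t i)) - μ * ∑ i, t i := sub_le_sub_right hlog _
      _ = ∑ i, (Real.log (1 + σ i * t i) - μ * t i) := hsum2.symm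
  -- diagonal of conjugated PSD matrix is nonneg
  have hdiag_nn : ∀ (S : Matrix (Fin n) (Fin n) ℂ), S.PosSemidef →
      ∀ i, 0 ≤ ((Vᴴ * S * V) i i).re := by
    intro S hS i
    have hT : (Vᴴ * S * V).PosSemidef := by simpa using hS.mul_mul_conjTranspose_same Vᴴ
    have h0 := hT.dotProduct_mulVec_nonneg (Pi.single i 1)
    simp [dotProduct, Matrix.mulVec_single, Pi.single_apply, Finset.sum_ite_eq] at h0
    simpa using (Complex.le_def.mp h0).1
  -- value at S*
  have hTstar : Vᴴ * waterfillMatrix V σ μ * V = Matrix.diagonal (fun i => ((d i : ℝ) : ℂ)) := by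
    rw [hwf_eq, show Vᴴ * (V * Matrix.diagonal (fun i => ((d i : ℝ) : ℂ)) * Vᴴ) * V
      = (Vᴴ * V) * Matrix.diagonal (fun i => ((d i : ℝ) : ℂ)) * (Vᴴ * V) from by
        simp only [Matrix.mul_assoc], hVV, one_mul, mul_one]
  have hdet_star : ((1 + R * Hᴴ * waterfillMatrix V σ μ * H * R).det).re
      = ∏ i, (1 + σ i * d i) := by
    rw [chain _, hTstar, Matrix.diagonal_mul_diagonal,
      show (1 : Matrix (Fin n) (Fin n) ℂ) = Matrix.diagonal (fun _ => (1:ℂ)) from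
        Matrix.diagonal_one.symm,
      Matrix.diagonal_add, Matrix.det_diagonal]
    have hp : ∏ i, ((1:ℂ) + (d i : ℂ) * (σ i : ℂ)) = ((∏ i, (1 + σ i * d i) : ℝ) : ℂ) := by
      push_cast
      exact Finset.prod_congr rfl fun i _ => by ring
    rw [hp, Complex.ofReal_re]
  have htr_star : ((waterfillMatrix V σ μ).trace).re = ∑ i, d i := by
    rw [hwf_eq, Matrix.trace_mul_cycle, hVV, one_mul, Matrix.trace_diagonal]
    rw [show ∑ i, ((d i : ℝ) : ℂ) = ((∑ i, d i : ℝ) : ℂ) from by push_cast; rfl]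
    exact Complex.ofReal_re _
  have hval : Real.log ((1 + R * Hᴴ * waterfillMatrix V σ μ * H * R).det).re
      - μ * ((waterfillMatrix V σ μ).trace).re
      = ∑ i, (Real.log (1 + σ i * d i) - μ * d i) := by
    rw [hdet_star, htr_star, Real.log_prod (fun i _ => by
      have := mul_nonneg (hσ i) (hdnn i)
      positivity), Finset.sum_sub_distrib, Finset.mul_sum]
  intro S hS
  calc Real.log ((1 + R * Hᴴ * S * H * R).det).re - μ * (S.trace).re
      ≤ ∑ i, (Real.log (1 + σ i * ((Vᴴ * S * V) i i).re) - μ * ((Vᴴ * S * V) i i).re) :=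
        bound S hS
    _ ≤ ∑ i, (Real.log (1 + σ i * d i) - μ * d i) := by
        apply Finset.sum_le_sum
        intro i _
        exact wf_scalar (hσ i) hμ (hdiag_nn S hS i)
    _ = _ := hval.symm
end

section
/- Let E be a real inner product space and f : E → ℝ differentiable with gradient ∇f satisfying ‖∇f(x) − ∇f(y)‖ ≤ L ‖x − y‖ for all x, y, where L > 0. Let C ⊆ E be a nonempty subset, x ∈ C, μ > 0, and let y ∈ C satisfy ‖y − (x + μ ∇f(x))‖ ≤ ‖z − (x + μ ∇f(x))‖ for all z ∈ C. Then f(y) ≥ f(x) + (1/2)(1/μ − L) ‖y − x‖². In particular, if μ ≤ ρ/L for some 0 < ρ < 1, then f(y) ≥ f(x) + (L/2)(1/ρ − 1) ‖y − x‖² ≥ f(x), so one projected gradient ascent step does not decrease f. -/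
lemma descent_lemma {E : Type*} [NormedAddCommGroup E] [InnerProductSpace ℝ E]
    (f : E → ℝ) (g : E → E) (hf : Differentiable ℝ f)
    (hgrad : ∀ x h, fderiv ℝ f x h = (inner ℝ (g x) h : ℝ))
    (L : ℝ) (hL : 0 < L) (hlip : ∀ x y, ‖g x - g y‖ ≤ L * ‖x - y‖)
    (x y : E) :
    f x + inner ℝ (g x) (y - x) - L / 2 * ‖y - x‖ ^ 2 ≤ f y := by
  set v := y - x with hv
  have hcg : Continuous g := by
    have : LipschitzWith (Real.toNNReal L) g :=
      LipschitzWith.of_dist_le_mul fun a b => by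
        rw [dist_eq_norm, dist_eq_norm, Real.coe_toNNReal _ hL.le]
        exact hlip a b
    exact this.continuous
  have hderiv : ∀ t : ℝ, HasDerivAt (fun t : ℝ => f (x + t • v))
      ((inner ℝ (g (x + t • v)) v : ℝ)) t := by
    intro t
    have h1 : HasDerivAt (fun t : ℝ => x + t • v) v t := by
      simpa using ((hasDerivAt_id t).smul_const v).const_add x
    have h2 := (hf (x + t • v)).hasFDerivAt.comp_hasDerivAt t h1
    simp only [hgrad] at h2; exact h2
  have hcont : Continuous fun t : ℝ => (inner ℝ (g (x + t • v)) v : ℝ) := by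
    exact (hcg.comp (by continuity)).inner continuous_const
  have hint : f y - f x = ∫ t in (0:ℝ)..1, (inner ℝ (g (x + t • v)) v : ℝ) := by
    have := intervalIntegral.integral_eq_sub_of_hasDerivAt
      (f := fun t : ℝ => f (x + t • v)) (fun t _ => hderiv t)
      (hcont.intervalIntegrable 0 1)
    simp only [one_smul, zero_smul, add_zero] at this
    rw [this]
    congr 1 <;> simp [hv]
  have hbound : ∀ t ∈ Set.Icc (0:ℝ) 1,
      (inner ℝ (g x) v : ℝ) - L * t * ‖v‖ ^ 2 ≤ (inner ℝ (g (x + t • v)) v : ℝ) := by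
    intro t ht
    have h1 : (inner ℝ (g (x + t • v)) v : ℝ) - inner ℝ (g x) v
        = inner ℝ (g (x + t • v) - g x) v := by rw [inner_sub_left]
    have h2 : |(inner ℝ (g (x + t • v) - g x) v : ℝ)| ≤ L * t * ‖v‖ ^ 2 := by
      calc |(inner ℝ (g (x + t • v) - g x) v : ℝ)| ≤ ‖g (x + t • v) - g x‖ * ‖v‖ :=
            abs_real_inner_le_norm _ _
        _ ≤ (L * ‖x + t • v - x‖) * ‖v‖ := by
            gcongr; exact hlip _ _
        _ = L * t * ‖v‖ ^ 2 := by
            rw [add_sub_cancel_left, norm_smul, Real.norm_eq_abs, abs_of_nonneg ht.1]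
            ring
    nlinarith [abs_le.mp h2]
  have hmono : ∫ t in (0:ℝ)..1, ((inner ℝ (g x) v : ℝ) - L * t * ‖v‖ ^ 2)
      ≤ ∫ t in (0:ℝ)..1, (inner ℝ (g (x + t • v)) v : ℝ) := by
    apply intervalIntegral.integral_mono_on zero_le_one
    · exact (Continuous.intervalIntegrable (by continuity) 0 1)
    · exact hcont.intervalIntegrable 0 1
    · exact hbound
  have hval : ∫ t in (0:ℝ)..1, ((inner ℝ (g x) v : ℝ) - L * t * ‖v‖ ^ 2)
      = (inner ℝ (g x) v : ℝ) - L / 2 * ‖v‖ ^ 2 := by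
    have h2 : IntervalIntegrable (fun t : ℝ => L * t * ‖v‖ ^ 2)
        MeasureTheory.volume 0 1 := (Continuous.intervalIntegrable (by continuity) 0 1)
    rw [intervalIntegral.integral_sub intervalIntegrable_const h2]
    have he : ∀ t : ℝ, L * t * ‖v‖ ^ 2 = (L * ‖v‖ ^ 2) * t := fun t => by ring
    simp_rw [he]
    rw [intervalIntegral.integral_const_mul, integral_id, intervalIntegral.integral_const]
    simp
    ring
  rw [hval] at hmono
  linarith [hint]


/-- Ascent property of one projected gradient step. Let `E` be a real inner
product space, `f : E → ℝ` differentiable with gradient `g` (characterized by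
`df_x(h) = ⟨g x, h⟩`) that is `L`-Lipschitz, `L > 0`. Let `C ⊆ E` be nonempty, `x ∈ C`,
`μ > 0`, and let `y ∈ C` be a projection of `x + μ ∇f(x)` onto `C`. Then
`f(y) ≥ f(x) + (1/2)(1/μ − L)‖y − x‖²`; in particular, if `μ ≤ ρ/L` with `0 < ρ < 1`,
then `f(y) ≥ f(x) + (L/2)(1/ρ − 1)‖y − x‖² ≥ f(x)`. -/
theorem projected_gradient_ascent_step {E : Type*} [NormedAddCommGroup E]
    [InnerProductSpace ℝ E]
    (f : E → ℝ) (g : E → E) (hf : Differentiable ℝ f)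
    (hgrad : ∀ x h, fderiv ℝ f x h = (inner ℝ (g x) h : ℝ))
    (L : ℝ) (hL : 0 < L) (hlip : ∀ x y, ‖g x - g y‖ ≤ L * ‖x - y‖)
    (C : Set E) (hC : C.Nonempty) (x : E) (hx : x ∈ C) (μ : ℝ) (hμ : 0 < μ)
    (y : E) (hy : y ∈ C)
    (hproj : ∀ z ∈ C, ‖y - (x + μ • g x)‖ ≤ ‖z - (x + μ • g x)‖) :
    (f x + (1 / 2) * (1 / μ - L) * ‖y - x‖ ^ 2 ≤ f y) ∧
    ∀ ρ : ℝ, 0 < ρ → ρ < 1 → μ ≤ ρ / L →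
      f x + (L / 2) * (1 / ρ - 1) * ‖y - x‖ ^ 2 ≤ f y ∧ f x ≤ f y := by
  have hp := hproj x hx
  have hp2 : ‖(y - x) - μ • g x‖ ^ 2 ≤ ‖μ • g x‖ ^ 2 := by
    have h1 : y - (x + μ • g x) = (y - x) - μ • g x := by abel
    have h2 : x - (x + μ • g x) = -(μ • g x) := by abel
    rw [h1, h2, norm_neg] at hp
    exact pow_le_pow_left₀ (norm_nonneg _) hp 2
  have hexp : ‖(y - x) - μ • g x‖ ^ 2
      = ‖y - x‖ ^ 2 - 2 * (μ * (inner ℝ (g x) (y - x) : ℝ)) + ‖μ • g x‖ ^ 2 := by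
    rw [norm_sub_sq_real, real_inner_smul_right, real_inner_comm]
  have hI : ‖y - x‖ ^ 2 ≤ 2 * μ * (inner ℝ (g x) (y - x) : ℝ) := by
    rw [hexp] at hp2; linarith
  have hdesc := descent_lemma f g hf hgrad L hL hlip x y
  have hI2 : ‖y - x‖ ^ 2 / (2 * μ) ≤ (inner ℝ (g x) (y - x) : ℝ) := by
    rw [div_le_iff₀ (by positivity)]
    linarith
  have hmain : f x + (1 / 2) * (1 / μ - L) * ‖y - x‖ ^ 2 ≤ f y := by
    have heq : (1 / 2) * (1 / μ - L) * ‖y - x‖ ^ 2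
        = ‖y - x‖ ^ 2 / (2 * μ) - L / 2 * ‖y - x‖ ^ 2 := by
      field_simp
    rw [heq]; linarith
  refine ⟨hmain, fun ρ hρ0 hρ1 hμρ => ?_⟩
  have hN : (0:ℝ) ≤ ‖y - x‖ ^ 2 := by positivity
  have h1μ : L / ρ ≤ 1 / μ := by
    rw [div_le_div_iff₀ hρ0 hμ]
    have := (le_div_iff₀ hL).mp hμρ
    linarith
  have hco : (L / 2) * (1 / ρ - 1) * ‖y - x‖ ^ 2 ≤ (1 / 2) * (1 / μ - L) * ‖y - x‖ ^ 2 := by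
    have : (L / 2) * (1 / ρ - 1) ≤ (1 / 2) * (1 / μ - L) := by
      have : L / ρ = L * (1 / ρ) := by ring
      nlinarith
    nlinarith
  have hpos : 0 ≤ (L / 2) * (1 / ρ - 1) * ‖y - x‖ ^ 2 := by
    have : 1 ≤ 1 / ρ := by rw [le_div_iff₀ hρ0]; linarith
    have h2 : 0 ≤ (L / 2) * (1 / ρ - 1) := by nlinarith
    positivity
  exact ⟨by linarith, by linarith⟩
end

section
/- Let b, u ∈ ℂ^n and let θ ∈ ℂ with |θ| = 1. Then det( I_n + θ b uᴴ + conj(θ) u bᴴ ) = |1 + θ σ|² − ‖b‖² ‖u‖², where σ = uᴴ b = Σ_i conj(u_i) b_i. In particular this determinant is a real number. -/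
open Matrix

/-- For `b, u ∈ ℂ^n` and `θ ∈ ℂ` with `|θ| = 1`,
`det(I_n + θ b uᴴ + conj(θ) u bᴴ) = |1 + θ σ|² − ‖b‖² ‖u‖²` where `σ = uᴴ b`.
In particular the determinant is a real number. -/
theorem det_one_add_rank_two_update {n : ℕ} (b u : Fin n → ℂ) (θ : ℂ)
    (hθ : ‖θ‖ = 1) :
    ((1 : Matrix (Fin n) (Fin n) ℂ) + θ • Matrix.vecMulVec b (star u)
        + (starRingEnd ℂ θ) • Matrix.vecMulVec u (star b)).det
      = ((‖1 + θ * ∑ i, (starRingEnd ℂ) (u i) * b i‖ ^ 2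
          - (∑ i, ‖b i‖ ^ 2) * (∑ i, ‖u i‖ ^ 2) : ℝ) : ℂ) := by
  set c := starRingEnd ℂ with hc
  have habs : ∀ z : ℂ, ((‖z‖ ^ 2 : ℝ) : ℂ) = z * c z := by
    intro z
    rw [← Complex.normSq_eq_norm_sq]
    exact (Complex.mul_conj z).symm
  have hθθ : θ * c θ = 1 := by
    rw [← habs, hθ]; norm_num
  set A : Matrix (Fin n) (Fin 2) ℂ := Matrix.of fun i j => ![θ * b i, c θ * u i] j with hA
  set B : Matrix (Fin 2) (Fin n) ℂ := Matrix.of fun j i => ![c (u i), c (b i)] j with hB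
  have hAB : θ • Matrix.vecMulVec b (star u) + c θ • Matrix.vecMulVec u (star b) = A * B := by
    ext i k
    simp [hc, hA, hB, Matrix.mul_apply, Fin.sum_univ_two, Matrix.vecMulVec_apply,
      Pi.star_apply, mul_comm, mul_assoc, mul_left_comm, Finset.mul_sum]
  rw [add_assoc, hAB, Matrix.det_one_add_mul_comm, Matrix.det_fin_two]
  have e00 : ((1 + B * A : Matrix (Fin 2) (Fin 2) ℂ)) 0 0 = 1 + θ * ∑ i, c (u i) * b i := by
    simp [hA, hB, Matrix.mul_apply, Matrix.one_apply, Finset.mul_sum]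
    exact Finset.sum_congr rfl fun i _ => by ring
  have e11 : ((1 + B * A : Matrix (Fin 2) (Fin 2) ℂ)) 1 1 = 1 + c θ * ∑ i, c (b i) * u i := by
    simp [hA, hB, Matrix.mul_apply, Matrix.one_apply, Finset.mul_sum]
    exact Finset.sum_congr rfl fun i _ => by ring
  have e01 : ((1 + B * A : Matrix (Fin 2) (Fin 2) ℂ)) 0 1 = c θ * ∑ i, c (u i) * u i := by
    simp [hA, hB, Matrix.mul_apply, Matrix.one_apply, Finset.mul_sum]
    exact Finset.sum_congr rfl fun i _ => by ring
  have e10 : ((1 + B * A : Matrix (Fin 2) (Fin 2) ℂ)) 1 0 = θ * ∑ i, c (b i) * b i := by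
    simp [hA, hB, Matrix.mul_apply, Matrix.one_apply, Finset.mul_sum]
    exact Finset.sum_congr rfl fun i _ => by ring
  rw [e00, e11, e01, e10]
  have hcs : c (∑ i, c (u i) * b i) = ∑ i, c (b i) * u i := by
    rw [map_sum]
    exact Finset.sum_congr rfl fun i _ => by simp [hc, mul_comm]
  have hconj : c (1 + θ * ∑ i, c (u i) * b i) = 1 + c θ * ∑ i, c (b i) * u i := by
    rw [_root_.map_add, _root_.map_one, _root_.map_mul, hcs]
  have h1 : ((‖1 + θ * ∑ i, c (u i) * b i‖ ^ 2 : ℝ) : ℂ)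
      = (1 + θ * ∑ i, c (u i) * b i) * (1 + c θ * ∑ i, c (b i) * u i) := by
    rw [habs, hconj]
  have h2 : (((∑ i, ‖b i‖ ^ 2 : ℝ)) : ℂ) = ∑ i, c (b i) * b i := by
    rw [Complex.ofReal_sum]
    exact Finset.sum_congr rfl fun i _ => by rw [habs]; ring
  have h3 : (((∑ i, ‖u i‖ ^ 2 : ℝ)) : ℂ) = ∑ i, c (u i) * u i := by
    rw [Complex.ofReal_sum]
    exact Finset.sum_congr rfl fun i _ => by rw [habs]; ring
  rw [Complex.ofReal_sub, Complex.ofReal_mul, h1, h2, h3]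
  linear_combination (-(∑ i, c (u i) * u i) * (∑ i, c (b i) * b i)) * hθθ
end

section
/- Let A ∈ ℂ^{n×n} be Hermitian positive definite, let b, u ∈ ℂ^n, set B = b uᴴ, and suppose σ := uᴴ A⁻¹ b ≠ 0 (σ is the unique nonzero eigenvalue of A⁻¹B, equal to tr(A⁻¹B)). Define θ* = conj(σ)/|σ| = exp(−i·arg σ). Then for every θ ∈ ℂ with |θ| = 1, det( A + θ B + conj(θ) Bᴴ ) ≤ det( A + θ* B + conj(θ*) Bᴴ ), where both determinants are real numbers since the matrices are Hermitian. That is, θ* maximizes θ ↦ det(A + θB + conj(θ)Bᴴ) over the unit circle. -/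
open Matrix
open scoped ComplexOrder

lemma det_rank2_update {n : ℕ} (A : Matrix (Fin n) (Fin n) ℂ) (hA : A.PosDef)
    (b u : Fin n → ℂ) (θ : ℂ) :
    (A + θ • Matrix.vecMulVec b (star u)
        + (starRingEnd ℂ θ) • (Matrix.vecMulVec b (star u))ᴴ).det
      = A.det * ((1 + θ * (dotProduct (star u) (A⁻¹ *ᵥ b)))
          * (1 + (starRingEnd ℂ θ) * (dotProduct (star b) (A⁻¹ *ᵥ u)))
        - ((starRingEnd ℂ θ) * (dotProduct (star u) (A⁻¹ *ᵥ u)))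
          * (θ * (dotProduct (star b) (A⁻¹ *ᵥ b)))) := by
  have hdet : A.det ≠ 0 := hA.det_pos.ne'
  have hinv : A * A⁻¹ = 1 := Matrix.mul_nonsing_inv A hdet.isUnit
  set B := Matrix.vecMulVec b (star u) with hB
  set C := θ • B + (starRingEnd ℂ θ) • Bᴴ with hC
  have key : A + θ • B + (starRingEnd ℂ θ) • Bᴴ = A * (1 + A⁻¹ * C) := by
    rw [mul_add, mul_one, ← mul_assoc, hinv, one_mul, add_assoc]
  set U : Matrix (Fin n) (Fin 2) ℂ :=
    Matrix.of (fun i j => ![θ • (A⁻¹ *ᵥ b), (starRingEnd ℂ θ) • (A⁻¹ *ᵥ u)] j i) with hU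
  set V : Matrix (Fin 2) (Fin n) ℂ := Matrix.of ![star u, star b] with hV
  have hUV : A⁻¹ * C = U * V := by
    ext i k
    simp only [hC, hB, Matrix.mul_apply, Matrix.add_apply, Matrix.smul_apply,
      Matrix.vecMulVec_apply, Matrix.conjTranspose_apply, hU, hV, Matrix.of_apply,
      Fin.sum_univ_two, Matrix.cons_val_zero, Matrix.cons_val_one, Matrix.head_cons,
      Pi.smul_apply, Matrix.mulVec, dotProduct, smul_eq_mul, Pi.star_apply,
      star_mul', star_star, Finset.mul_sum, Finset.sum_add_distrib]
    rw [Finset.sum_mul, Finset.sum_mul, ← Finset.sum_add_distrib]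
    congr 1; ext j; ring
  rw [key, det_mul, hUV, Matrix.det_one_add_mul_comm]
  congr 1
  have h00 : (V * U) 0 0 = θ * (dotProduct (star u) (A⁻¹ *ᵥ b)) := by
    simp only [hU, hV, Matrix.mul_apply, Matrix.of_apply, Fin.isValue,
      Matrix.cons_val_zero, Matrix.cons_val_one, Matrix.head_cons, Pi.smul_apply,
      smul_eq_mul, dotProduct, Matrix.mulVec, Finset.mul_sum]
    exact Finset.sum_congr rfl fun x _ => Finset.sum_congr rfl fun j _ => by ring
  have h01 : (V * U) 0 1 = (starRingEnd ℂ θ) * (dotProduct (star u) (A⁻¹ *ᵥ u)) := by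
    simp only [hU, hV, Matrix.mul_apply, Matrix.of_apply, Fin.isValue,
      Matrix.cons_val_zero, Matrix.cons_val_one, Matrix.head_cons, Pi.smul_apply,
      smul_eq_mul, dotProduct, Matrix.mulVec, Finset.mul_sum]
    exact Finset.sum_congr rfl fun x _ => Finset.sum_congr rfl fun j _ => by ring
  have h10 : (V * U) 1 0 = θ * (dotProduct (star b) (A⁻¹ *ᵥ b)) := by
    simp only [hU, hV, Matrix.mul_apply, Matrix.of_apply, Fin.isValue,
      Matrix.cons_val_zero, Matrix.cons_val_one, Matrix.head_cons, Pi.smul_apply,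
      smul_eq_mul, dotProduct, Matrix.mulVec, Finset.mul_sum]
    exact Finset.sum_congr rfl fun x _ => Finset.sum_congr rfl fun j _ => by ring
  have h11 : (V * U) 1 1 = (starRingEnd ℂ θ) * (dotProduct (star b) (A⁻¹ *ᵥ u)) := by
    simp only [hU, hV, Matrix.mul_apply, Matrix.of_apply, Fin.isValue,
      Matrix.cons_val_zero, Matrix.cons_val_one, Matrix.head_cons, Pi.smul_apply,
      smul_eq_mul, dotProduct, Matrix.mulVec, Finset.mul_sum]
    exact Finset.sum_congr rfl fun x _ => Finset.sum_congr rfl fun j _ => by ring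
  rw [Matrix.det_fin_two]
  simp [Matrix.add_apply, Matrix.one_apply, h00, h01, h10, h11]

/-- Let `A ∈ ℂ^{n×n}` be Hermitian positive definite, `B = b uᴴ`, and
suppose `σ = uᴴ A⁻¹ b ≠ 0`. With `θ* = conj(σ)/|σ|`, for every `θ` with `|θ| = 1`,
`det(A + θ B + conj(θ) Bᴴ) ≤ det(A + θ* B + conj(θ*) Bᴴ)` (both determinants are real,
compared via their real parts). -/
theorem optimal_unit_phase_det {n : ℕ} (A : Matrix (Fin n) (Fin n) ℂ) (hA : A.PosDef)
    (b u : Fin n → ℂ) (σ : ℂ)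
    (hσdef : σ = dotProduct (star u) (A⁻¹ *ᵥ b)) (hσ : σ ≠ 0) :
    ∀ θ : ℂ, ‖θ‖ = 1 →
      ((A + θ • Matrix.vecMulVec b (star u)
          + (starRingEnd ℂ θ) • (Matrix.vecMulVec b (star u))ᴴ).det).re ≤
      ((A + (starRingEnd ℂ σ / ((‖σ‖ : ℝ) : ℂ)) • Matrix.vecMulVec b (star u)
          + (starRingEnd ℂ (starRingEnd ℂ σ / ((‖σ‖ : ℝ) : ℂ))) •
              (Matrix.vecMulVec b (star u))ᴴ).det).re := by
  intro θ hθ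
  have habsσ : (‖σ‖ : ℝ) ≠ 0 := norm_ne_zero_iff.mpr hσ
  set θs : ℂ := starRingEnd ℂ σ / ((‖σ‖ : ℝ) : ℂ) with hθs
  have hθsabs : ‖θs‖ = 1 := by
    rw [hθs, norm_div, Complex.norm_conj, Complex.norm_real, norm_norm, div_self habsσ]
  set α := dotProduct (star u) (A⁻¹ *ᵥ u) with hα
  set β := dotProduct (star b) (A⁻¹ *ᵥ b) with hβ
  set τ := dotProduct (star b) (A⁻¹ *ᵥ u) with hτ
  have hαnn : 0 ≤ α := hA.inv.posSemidef.dotProduct_mulVec_nonneg u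
  have hβnn : 0 ≤ β := hA.inv.posSemidef.dotProduct_mulVec_nonneg b
  have hd : 0 < A.det := hA.det_pos
  have hH : ∀ i j, (starRingEnd ℂ) (A⁻¹ i j) = A⁻¹ j i := by
    intro i j
    have := hA.isHermitian.inv
    conv_rhs => rw [← this]
    simp [Matrix.conjTranspose_apply]
  have hτσ : τ = (starRingEnd ℂ) σ := by
    rw [hτ, hσdef]
    simp only [dotProduct, Matrix.mulVec, map_sum, _root_.map_mul, Pi.star_apply,
      Finset.mul_sum, Complex.conj_conj]
    rw [Finset.sum_comm]
    refine Finset.sum_congr rfl fun i _ => Finset.sum_congr rfl fun j _ => ?_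
    rw [hH]
    simp only [Complex.star_def, Complex.conj_conj]
    ring
  -- unit modulus facts
  have hunit : (starRingEnd ℂ) θ * θ = 1 := by
    have := Complex.mul_conj θ
    rw [Complex.normSq_eq_norm_sq, hθ] at this
    rw [mul_comm]; simpa using this
  have hunits : (starRingEnd ℂ) θs * θs = 1 := by
    have := Complex.mul_conj θs
    rw [Complex.normSq_eq_norm_sq, hθsabs] at this
    rw [mul_comm]; simpa using this
  -- determinant formulas
  have hdetθ : ∀ φ : ℂ, (starRingEnd ℂ) φ * φ = 1 →
      ((A + φ • Matrix.vecMulVec b (star u)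
          + (starRingEnd ℂ φ) • (Matrix.vecMulVec b (star u))ᴴ).det)
        = A.det * (((Complex.normSq (1 + φ * σ) : ℝ) : ℂ) - α * β) := by
    intro φ hφ
    rw [det_rank2_update A hA b u φ, ← hσdef, ← hα, ← hβ, ← hτ, hτσ]
    have hc : (starRingEnd ℂ) (1 + φ * σ) = 1 + (starRingEnd ℂ) φ * (starRingEnd ℂ) σ := by
      simp
    have h1 : (1 + φ * σ) * (1 + (starRingEnd ℂ) φ * (starRingEnd ℂ) σ)
        = ((Complex.normSq (1 + φ * σ) : ℝ) : ℂ) := by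
      rw [← Complex.mul_conj, hc]
    rw [h1]
    have hx : (starRingEnd ℂ) φ * α * (φ * β) = α * β := by
      calc (starRingEnd ℂ) φ * α * (φ * β) = ((starRingEnd ℂ) φ * φ) * (α * β) := by ring
        _ = α * β := by rw [hφ, one_mul]
    rw [hx]
  have hcast : ((‖σ‖ : ℝ) : ℂ) ≠ 0 := by exact_mod_cast habsσ
  have hws : θs * σ = ((‖σ‖ : ℝ) : ℂ) := by
    rw [hθs, div_mul_eq_mul_div, mul_comm, Complex.mul_conj, Complex.normSq_eq_norm_sq]
    rw [Complex.ofReal_pow, pow_two, mul_div_assoc, div_self hcast, mul_one]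
  -- real/imag structure
  have hαre : α.im = 0 ∧ 0 ≤ α.re := by
    rw [Complex.le_def] at hαnn; exact ⟨hαnn.2.symm, by simpa using hαnn.1⟩
  have hβre : β.im = 0 ∧ 0 ≤ β.re := by
    rw [Complex.le_def] at hβnn; exact ⟨hβnn.2.symm, by simpa using hβnn.1⟩
  have hdre : A.det.im = 0 ∧ 0 ≤ A.det.re := by
    rw [Complex.lt_def] at hd; exact ⟨hd.2.symm, le_of_lt (by simpa using hd.1)⟩
  rw [hdetθ θ hunit, hdetθ θs hunits]
  have hre : ∀ x : ℝ, (A.det * ((x : ℂ) - α * β)).re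
      = A.det.re * (x - α.re * β.re) := by
    intro x
    simp [Complex.mul_re, Complex.sub_re, Complex.sub_im, hdre.1, hαre.1, hβre.1,
      Complex.mul_im]
  rw [hre, hre]
  apply mul_le_mul_of_nonneg_left _ hdre.2
  apply sub_le_sub_right
  -- |1+θσ|² ≤ (1+|σ|)²
  have h1 : ‖1 + θ * σ‖ ≤ 1 + ‖σ‖ := by
    calc ‖1 + θ * σ‖ ≤ ‖(1 : ℂ)‖ + ‖θ * σ‖ := norm_add_le _ _
    _ = 1 + ‖σ‖ := by rw [norm_one, norm_mul, hθ, one_mul]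
  have h2 : Complex.normSq (1 + θs * σ) = (1 + ‖σ‖) ^ 2 := by
    rw [hws, ← Complex.ofReal_one, ← Complex.ofReal_add, Complex.normSq_ofReal]
    ring
  rw [h2, Complex.normSq_eq_norm_sq]
  have : (0:ℝ) ≤ ‖1 + θ * σ‖ := norm_nonneg _
  nlinarith [norm_nonneg σ]
end

section
/- Let ē ∈ ℝ^M and P > 0. Then there exists η ∈ ℝ such that Σ_{i=1}^M max(ē_i − η, 0) = P, and for any such η, the vector ẽ ∈ ℝ^M defined by ẽ_i = max(ē_i − η, 0) satisfies ẽ_i ≥ 0 for all i, Σ_i ẽ_i = P, and ‖ẽ − ē‖² ≤ ‖x − ē‖² for every x ∈ ℝ^M with x_i ≥ 0 for all i and Σ_i x_i = P. That is, the water-filling vector ẽ is the Euclidean projection of ē onto the scaled simplex {x ∈ ℝ^M : x ≥ 0, Σ_i x_i = P}. -/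
/-- Water-filling: for `ē ∈ ℝ^M` and `P > 0` there exists `η ∈ ℝ` with
`Σ_i max(ē_i − η, 0) = P`, and for any such `η` the vector `ẽ_i = max(ē_i − η, 0)` is the
Euclidean projection of `ē` onto the scaled simplex `{x : x ≥ 0, Σ x_i = P}`. -/
theorem waterfilling_projection {M : ℕ} (hM : 0 < M) (ebar : Fin M → ℝ)
    (P : ℝ) (hP : 0 < P) :
    (∃ η : ℝ, ∑ i, max (ebar i - η) 0 = P) ∧
    ∀ η : ℝ, (∑ i, max (ebar i - η) 0) = P →
      (∀ i, 0 ≤ max (ebar i - η) 0) ∧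
      (∑ i, max (ebar i - η) 0) = P ∧
      ∀ x : Fin M → ℝ, (∀ i, 0 ≤ x i) → (∑ i, x i) = P →
        ∑ i, (max (ebar i - η) 0 - ebar i) ^ 2 ≤ ∑ i, (x i - ebar i) ^ 2 := by
  have hne : Nonempty (Fin M) := ⟨⟨0, hM⟩⟩
  constructor
  · -- existence via IVT
    set f : ℝ → ℝ := fun η => ∑ i, max (ebar i - η) 0 with hf
    have hcont : Continuous f := by
      apply continuous_finset_sum
      intro i _
      exact (continuous_const.sub continuous_id).max continuous_const
    obtain ⟨j, hj⟩ := Finite.exists_min ebar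
    obtain ⟨k, hk⟩ := Finite.exists_max ebar
    set a := ebar j - P with ha
    set b := ebar k with hb
    have hab : a ≤ b := by have := hj k; simp only [ha, hb]; linarith
    have hfb : f b = 0 := by
      apply Finset.sum_eq_zero
      intro i _
      exact max_eq_right (by have := hk i; linarith)
    have hfa : P ≤ f a := by
      have h1 : max (ebar j - a) 0 ≤ f a := by
        apply Finset.single_le_sum (fun i _ => le_max_right _ 0) (Finset.mem_univ j)
      have : max (ebar j - a) 0 = P := by
        rw [max_eq_left (by simp [ha]; linarith)]; simp [ha]
      linarith
    have hmem : P ∈ Set.Icc (f b) (f a) := ⟨by rw [hfb]; linarith, hfa⟩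
    obtain ⟨η, _, hη⟩ := intermediate_value_Icc' hab hcont.continuousOn hmem
    exact ⟨η, hη⟩
  · intro η hη
    refine ⟨fun i => le_max_right _ 0, hη, ?_⟩
    intro x hx hxsum
    have key : ∀ i, (max (ebar i - η) 0 - ebar i) ^ 2 +
        (-2 * η) * (x i - max (ebar i - η) 0) ≤ (x i - ebar i) ^ 2 := by
      intro i
      rcases le_or_gt (ebar i) η with h | h
      · rw [max_eq_right (by linarith)]
        have := hx i
        nlinarith [sq_nonneg (x i)]
      · rw [max_eq_left (by linarith)]
        nlinarith [sq_nonneg (x i - (ebar i - η))]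
    have hzero : ∑ i, (-2 * η) * (x i - max (ebar i - η) 0) = 0 := by
      rw [← Finset.mul_sum, Finset.sum_sub_distrib, hxsum, hη]
      ring
    calc ∑ i, (max (ebar i - η) 0 - ebar i) ^ 2
        = ∑ i, ((max (ebar i - η) 0 - ebar i) ^ 2
            + (-2 * η) * (x i - max (ebar i - η) 0)) := by
          rw [Finset.sum_add_distrib, hzero, add_zero]
      _ ≤ ∑ i, (x i - ebar i) ^ 2 := Finset.sum_le_sum fun i _ => key i
end
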